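/- Let N ≥ 1, b > 0 and 0 < p ≤ 1. There exists C > 0 with the following property: if u, v : ℝ^N → ℂ are differentiable at a point x ≠ 0, then the map y ↦ |y|^{−b}(G(u(y)) − G(v(y))), where G(z) = |z|^p z, is differentiable at x and its gradient satisfies |∇(|·|^{−b}(G∘u − G∘v))(x)| ≤ C [ |x|^{−b−1}(|u(x)|^p + |v(x)|^p)|u(x) − v(x)| + |x|^{−b}|u(x)|^p |∇(u − v)(x)| + |x|^{−b} |∇v(x)| |u(x) − v(x)|^p ]. -/

import Mathlib

open Real NNReal
set_option maxRecDepth 8000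
set_option maxHeartbeats 1000000
set_option synthInstance.maxHeartbeats 400000

noncomputable def Gd (p : ℝ) (z : ℂ) : ℂ →L[ℝ] ℂ :=
  (‖z‖ ^ p : ℝ) • ContinuousLinearMap.id ℝ ℂ
    + (p * ‖z‖ ^ (p - 2) : ℝ) • ((innerSL ℝ z).smulRight z)

lemma Gd_apply (p : ℝ) (z h : ℂ) :
    Gd p z h = (‖z‖ ^ p : ℝ) • h + (p * ‖z‖ ^ (p - 2) * (inner ℝ z h : ℝ)) • z := by
  rw [Gd, ContinuousLinearMap.add_apply, ContinuousLinearMap.smul_apply,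
    ContinuousLinearMap.smul_apply, ContinuousLinearMap.id_apply,
    ContinuousLinearMap.smulRight_apply, innerSL_apply_apply, smul_smul]

lemma Gd_zero {p : ℝ} (hp0 : 0 < p) : Gd p 0 = 0 := by
  ext h
  rw [ContinuousLinearMap.zero_apply, Gd_apply, norm_zero, Real.zero_rpow hp0.ne']
  simp

lemma sq_rpow (z : ℂ) : (‖z‖:ℝ) ^ (2:ℝ) = ‖z‖ * ‖z‖ := by
  rw [show (2:ℝ) = ((2:ℕ):ℝ) by norm_num, Real.rpow_natCast]; ring

lemma rpow_helper {p : ℝ} {z : ℂ} (hz : z ≠ 0) : ‖z‖ ^ (p-2) * (‖z‖ * ‖z‖) = ‖z‖ ^ p := by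
  rw [← sq_rpow, ← Real.rpow_add (norm_pos_iff.2 hz)]
  norm_num

lemma real_rpow_add_le {a b p : ℝ} (ha : 0 ≤ a) (hb : 0 ≤ b) (hp : 0 ≤ p) (hp1 : p ≤ 1) :
    (a + b) ^ p ≤ a ^ p + b ^ p := by
  have := NNReal.rpow_add_le_add_rpow (⟨a, ha⟩ : ℝ≥0) (⟨b, hb⟩ : ℝ≥0) hp hp1
  have h2 := NNReal.coe_le_coe.2 this
  push_cast [NNReal.coe_rpow] at h2
  exact h2

lemma real_rpow_sub_le {a b p : ℝ} (hb : 0 ≤ b) (hba : b ≤ a) (hp : 0 ≤ p) (hp1 : p ≤ 1) :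
    a ^ p - b ^ p ≤ (a - b) ^ p := by
  have h := real_rpow_add_le (a := a - b) (b := b) (by linarith) hb hp hp1
  rw [sub_add_cancel] at h
  linarith

lemma norm_rpow_sub_le {p : ℝ} (hp0 : 0 < p) (hp1 : p ≤ 1) {z w : ℂ} (hw : ‖w‖ ≤ ‖z‖) :
    |(‖z‖ : ℝ) ^ p - ‖w‖ ^ p| ≤ ‖z - w‖ ^ p := by
  rw [abs_of_nonneg (by linarith [Real.rpow_le_rpow (norm_nonneg w) hw hp0.le])]
  calc (‖z‖ : ℝ) ^ p - ‖w‖ ^ p ≤ (‖z‖ - ‖w‖) ^ p :=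
        real_rpow_sub_le (norm_nonneg w) hw hp0.le hp1
    _ ≤ ‖z - w‖ ^ p := Real.rpow_le_rpow (by linarith) (norm_sub_norm_le z w) hp0.le

lemma unit_sub {z w : ℂ} (hz : z ≠ 0) (hw : w ≠ 0) :
    ‖z‖ * ‖(‖z‖⁻¹ : ℝ) • z - (‖w‖⁻¹ : ℝ) • w‖ ≤ 2 * ‖z - w‖ := by
  have hnz : (‖z‖ : ℝ) ≠ 0 := norm_ne_zero_iff.2 hz
  have hnw : (‖w‖ : ℝ) ≠ 0 := norm_ne_zero_iff.2 hw
  have expand : (‖z‖⁻¹ : ℝ) • z - (‖w‖⁻¹ : ℝ) • w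
      = (‖z‖⁻¹ : ℝ) • (z - w) + ((‖z‖⁻¹ - ‖w‖⁻¹ : ℝ)) • w := by module
  have h1 : ‖((‖z‖⁻¹ : ℝ)) • (z - w)‖ = ‖z‖⁻¹ * ‖z - w‖ := by
    rw [norm_smul, Real.norm_eq_abs, abs_of_nonneg (by positivity)]
  have hc : (‖z‖⁻¹ - ‖w‖⁻¹ : ℝ) * (‖z‖ * ‖w‖) = ‖w‖ - ‖z‖ := by
    have e1 : (‖z‖:ℝ)⁻¹ * ‖z‖ = 1 := inv_mul_cancel₀ hnz
    have e2 : (‖w‖:ℝ)⁻¹ * ‖w‖ = 1 := inv_mul_cancel₀ hnw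
    calc (‖z‖⁻¹ - ‖w‖⁻¹ : ℝ) * (‖z‖ * ‖w‖)
        = ((‖z‖:ℝ)⁻¹ * ‖z‖) * ‖w‖ - ((‖w‖:ℝ)⁻¹ * ‖w‖) * ‖z‖ := by ring
      _ = ‖w‖ - ‖z‖ := by rw [e1, e2]; ring
  have h2 : |(‖z‖⁻¹ - ‖w‖⁻¹ : ℝ)| * (‖z‖ * ‖w‖) = |(‖w‖ : ℝ) - ‖z‖| := by
    rw [← abs_of_nonneg (by positivity : (0:ℝ) ≤ ‖z‖ * ‖w‖), ← abs_mul, hc]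
  have hb : |(‖w‖ : ℝ) - ‖z‖| ≤ ‖z - w‖ := by
    rw [← norm_sub_rev]
    exact abs_norm_sub_norm_le w z
  have step : ‖(‖z‖⁻¹ : ℝ) • z - (‖w‖⁻¹ : ℝ) • w‖
      ≤ ‖z‖⁻¹ * ‖z - w‖ + |(‖z‖⁻¹ - ‖w‖⁻¹ : ℝ)| * ‖w‖ := by
    rw [expand]
    calc ‖_ + _‖ ≤ ‖((‖z‖⁻¹ : ℝ)) • (z - w)‖ + ‖((‖z‖⁻¹ - ‖w‖⁻¹ : ℝ)) • w‖ := norm_add_le _ _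
      _ ≤ _ := by rw [h1, norm_smul, Real.norm_eq_abs]
  calc ‖z‖ * ‖(‖z‖⁻¹ : ℝ) • z - (‖w‖⁻¹ : ℝ) • w‖
      ≤ ‖z‖ * (‖z‖⁻¹ * ‖z - w‖ + |(‖z‖⁻¹ - ‖w‖⁻¹ : ℝ)| * ‖w‖) :=
        mul_le_mul_of_nonneg_left step (norm_nonneg z)
    _ = (‖z‖ * ‖z‖⁻¹) * ‖z - w‖ + |(‖z‖⁻¹ - ‖w‖⁻¹ : ℝ)| * (‖z‖ * ‖w‖) := by ring
    _ = ‖z - w‖ + |(‖w‖ : ℝ) - ‖z‖| := by rw [mul_inv_cancel₀ hnz, one_mul, h2]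
    _ ≤ 2 * ‖z - w‖ := by linarith

lemma rpow_mul_le {p : ℝ} (hp0 : 0 < p) (hp1 : p ≤ 1) {a c : ℝ} (ha : 0 < a) (hc : 0 ≤ c)
    (hca : c ≤ a) : a ^ p * c ≤ c ^ p * a := by
  rcases eq_or_lt_of_le hc with rfl | hc'
  · simp [Real.zero_rpow hp0.ne']
  have e : ∀ {x : ℝ}, 0 < x → x ^ p * x ^ (1-p) = x := by
    intro x hx
    rw [← Real.rpow_add hx]
    norm_num
  have mono : c ^ (1-p) ≤ a ^ (1-p) := Real.rpow_le_rpow hc hca (by linarith)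
  have cpos : 0 < c ^ p := Real.rpow_pos_of_pos hc' p
  have apos : 0 < a ^ p := Real.rpow_pos_of_pos ha p
  calc a ^ p * c = a ^ p * (c ^ p * c ^ (1-p)) := by rw [e hc']
    _ ≤ a ^ p * (c ^ p * a ^ (1-p)) := by
        apply mul_le_mul_of_nonneg_left _ apos.le
        exact mul_le_mul_of_nonneg_left mono cpos.le
    _ = c ^ p * (a ^ p * a ^ (1-p)) := by ring
    _ = c ^ p * a := by rw [e ha]

lemma A_norm_le {p : ℝ} (hp0 : 0 < p) (z h : ℂ) :
    ‖((‖z‖ ^ (p-2) * (inner ℝ z h : ℝ))) • z‖ ≤ ‖z‖ ^ p * ‖h‖ := by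
  rcases eq_or_ne z 0 with rfl | hz
  · simp [Real.zero_rpow hp0.ne']
  rw [norm_smul, Real.norm_eq_abs, abs_mul,
    abs_of_nonneg (Real.rpow_nonneg (norm_nonneg z) _)]
  have hinner : |(inner ℝ z h : ℝ)| ≤ ‖z‖ * ‖h‖ := abs_real_inner_le_norm z h
  calc ‖z‖ ^ (p-2) * |(inner ℝ z h : ℝ)| * ‖z‖
      ≤ ‖z‖ ^ (p-2) * (‖z‖ * ‖h‖) * ‖z‖ :=
        mul_le_mul_of_nonneg_right
          (mul_le_mul_of_nonneg_left hinner (Real.rpow_nonneg (norm_nonneg z) _)) (norm_nonneg z)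
    _ = (‖z‖ ^ (p-2) * (‖z‖ * ‖z‖)) * ‖h‖ := by ring
    _ = ‖z‖ ^ p * ‖h‖ := by rw [rpow_helper hz]

lemma Gd_norm_le {p : ℝ} (hp0 : 0 < p) (z : ℂ) : ‖Gd p z‖ ≤ (1 + p) * ‖z‖ ^ p := by
  rcases eq_or_ne z 0 with rfl | hz
  · rw [Gd_zero hp0, norm_zero]
    positivity
  apply ContinuousLinearMap.opNorm_le_bound _ (by positivity)
  intro h
  rw [Gd_apply]
  have h1 : ‖(‖z‖ ^ p : ℝ) • h‖ = ‖z‖ ^ p * ‖h‖ := by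
    rw [norm_smul, Real.norm_eq_abs, abs_of_nonneg (Real.rpow_nonneg (norm_nonneg z) p)]
  have hinner : |(inner ℝ z h : ℝ)| ≤ ‖z‖ * ‖h‖ := abs_real_inner_le_norm z h
  have h2 : ‖(p * ‖z‖ ^ (p-2) * (inner ℝ z h : ℝ)) • z‖ ≤ p * ‖z‖ ^ p * ‖h‖ := by
    rw [norm_smul, Real.norm_eq_abs, abs_mul, abs_mul, abs_of_nonneg hp0.le,
      abs_of_nonneg (Real.rpow_nonneg (norm_nonneg z) _)]
    calc p * ‖z‖ ^ (p-2) * |(inner ℝ z h : ℝ)| * ‖z‖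
        ≤ p * ‖z‖ ^ (p-2) * (‖z‖ * ‖h‖) * ‖z‖ :=
          mul_le_mul_of_nonneg_right
            (mul_le_mul_of_nonneg_left hinner (by positivity)) (norm_nonneg z)
      _ = p * (‖z‖ ^ (p-2) * (‖z‖ * ‖z‖)) * ‖h‖ := by ring
      _ = p * ‖z‖ ^ p * ‖h‖ := by rw [rpow_helper hz]
  calc ‖(‖z‖ ^ p : ℝ) • h + (p * ‖z‖ ^ (p-2) * (inner ℝ z h : ℝ)) • z‖
      ≤ ‖(‖z‖ ^ p : ℝ) • h‖ + ‖(p * ‖z‖ ^ (p-2) * (inner ℝ z h : ℝ)) • z‖ := norm_add_le _ _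
    _ ≤ ‖z‖ ^ p * ‖h‖ + p * ‖z‖ ^ p * ‖h‖ := by rw [h1]; linarith
    _ = (1 + p) * ‖z‖ ^ p * ‖h‖ := by ring

lemma hasFDerivAt_G {p : ℝ} (hp0 : 0 < p) (z : ℂ) :
    HasFDerivAt (fun w : ℂ => (‖w‖ ^ p : ℝ) • w) (Gd p z) z := by
  rcases eq_or_ne z 0 with rfl | hz
  · rw [Gd_zero hp0]
    rw [hasFDerivAt_iff_isLittleO_nhds_zero]
    simp only [zero_add, norm_zero, Real.zero_rpow hp0.ne', zero_smul, sub_zero,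
      ContinuousLinearMap.zero_apply]
    rw [Asymptotics.isLittleO_iff]
    intro c hc
    have T : Filter.Tendsto (fun h : ℂ => (‖h‖ : ℝ) ^ p) (nhds 0) (nhds 0) := by
      have h1 : Filter.Tendsto (fun t : ℝ => t ^ p) (nhds 0) (nhds ((0:ℝ) ^ p)) :=
        (Real.continuousAt_rpow_const 0 p (Or.inr hp0.le)).tendsto
      rw [Real.zero_rpow hp0.ne'] at h1
      exact h1.comp tendsto_norm_zero
    filter_upwards [T.eventually (eventually_le_nhds hc)] with h hh
    rw [norm_smul, Real.norm_eq_abs, abs_of_nonneg (Real.rpow_nonneg (norm_nonneg h) p)]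
    exact mul_le_mul_of_nonneg_right hh (norm_nonneg h)
  · have hn2 : (0:ℝ) < ‖z‖ ^ 2 := pow_pos (norm_pos_iff.2 hz) 2
    have hnsq : HasFDerivAt (fun w : ℂ => (‖w‖ ^ 2 : ℝ)) (2 • innerSL ℝ z) z :=
      (hasStrictFDerivAt_norm_sq z).hasFDerivAt
    have hr : HasDerivAt (fun t : ℝ => t ^ (p/2)) ((p/2) * (‖z‖ ^ 2 : ℝ) ^ (p/2 - 1)) (‖z‖ ^ 2) :=
      Real.hasDerivAt_rpow_const (Or.inl hn2.ne')
    have hc : HasFDerivAt (fun w : ℂ => ((‖w‖ ^ 2 : ℝ)) ^ (p/2))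
        (((p/2) * (‖z‖ ^ 2 : ℝ) ^ (p/2 - 1)) • (2 • innerSL ℝ z)) z := by
        have := hr.comp_hasFDerivAt z hnsq; exact this
    have key : ∀ w : ℂ, ((‖w‖ ^ 2 : ℝ)) ^ (p/2) = (‖w‖ : ℝ) ^ p := by
      intro w
      rw [← Real.rpow_natCast ‖w‖ 2, ← Real.rpow_mul (norm_nonneg w)]
      congr 1
      ring
    have hkey2 : ((‖z‖ ^ 2 : ℝ)) ^ (p/2 - 1) = (‖z‖ : ℝ) ^ (p - 2) := by
      rw [← Real.rpow_natCast ‖z‖ 2, ← Real.rpow_mul (norm_nonneg z)]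
      ring_nf
    simp only [key, hkey2] at hc
    have : HasFDerivAt (fun w : ℂ => (‖w‖ ^ p : ℝ) • w)
        ((‖z‖ ^ p : ℝ) • ContinuousLinearMap.id ℝ ℂ
          + ((p / 2 * ‖z‖ ^ (p - 2)) • (2 • innerSL ℝ z)).smulRight (id z)) z := by
      have h := hc.smul (hasFDerivAt_id z); exact h
    convert this using 1
    ext h
    rw [Gd_apply, ContinuousLinearMap.add_apply, ContinuousLinearMap.smul_apply,
      ContinuousLinearMap.smulRight_apply, ContinuousLinearMap.smul_apply,
      ContinuousLinearMap.smul_apply, innerSL_apply_apply, ContinuousLinearMap.id_apply]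
    simp only [smul_eq_mul, id_eq]
    congr 1
    ring

lemma Gd_holder_aux {p : ℝ} (hp0 : 0 < p) (hp1 : p ≤ 1) {z w : ℂ} (hw : ‖w‖ ≤ ‖z‖) :
    ‖Gd p z - Gd p w‖ ≤ (1 + 5*p) * ‖z - w‖ ^ p := by
  rcases eq_or_ne z w with rfl | hzw
  · rw [sub_self, norm_zero]
    positivity
  rcases eq_or_ne z 0 with rfl | hz
  · rw [norm_zero] at hw
    exact absurd (norm_le_zero_iff.1 hw).symm hzw
  apply ContinuousLinearMap.opNorm_le_bound _ (by positivity)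
  intro h
  rw [ContinuousLinearMap.sub_apply, Gd_apply, Gd_apply]
  set A := ((‖z‖:ℝ) ^ (p-2) * (inner ℝ z h : ℝ)) • z with hA
  set B := ((‖w‖:ℝ) ^ (p-2) * (inner ℝ w h : ℝ)) • w with hB
  have split : (‖z‖ ^ p : ℝ) • h + (p * ‖z‖ ^ (p-2) * (inner ℝ z h:ℝ)) • z
      - ((‖w‖ ^ p : ℝ) • h + (p * ‖w‖ ^ (p-2) * (inner ℝ w h:ℝ)) • w)
      = ((‖z‖ ^ p - ‖w‖ ^ p : ℝ)) • h + p • (A - B) := by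
    rw [hA, hB]; module
  rw [split]
  have part1 : ‖((‖z‖ ^ p - ‖w‖ ^ p : ℝ)) • h‖ ≤ ‖z - w‖ ^ p * ‖h‖ := by
    rw [norm_smul, Real.norm_eq_abs]
    exact mul_le_mul_of_nonneg_right (norm_rpow_sub_le hp0 hp1 hw) (norm_nonneg h)
  have hX : (0:ℝ) ≤ ‖z - w‖ ^ p * ‖h‖ := by positivity
  have part2 : ‖A - B‖ ≤ 5 * (‖z - w‖ ^ p * ‖h‖) := by
    rcases le_total ‖z‖ ‖z - w‖ with hcase | hcase
    · have m1 : (‖z‖:ℝ) ^ p ≤ ‖z - w‖ ^ p := Real.rpow_le_rpow (norm_nonneg z) hcase hp0.le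
      have m2 : (‖w‖:ℝ) ^ p ≤ ‖z - w‖ ^ p :=
        Real.rpow_le_rpow (norm_nonneg w) (hw.trans hcase) hp0.le
      calc ‖A - B‖ ≤ ‖A‖ + ‖B‖ := norm_sub_le _ _
        _ ≤ ‖z‖ ^ p * ‖h‖ + ‖w‖ ^ p * ‖h‖ :=
            add_le_add (A_norm_le hp0 z h) (A_norm_le hp0 w h)
        _ ≤ 5 * (‖z - w‖ ^ p * ‖h‖) := by
            nlinarith [mul_le_mul_of_nonneg_right m1 (norm_nonneg h),
              mul_le_mul_of_nonneg_right m2 (norm_nonneg h)]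
    · rcases eq_or_ne w 0 with rfl | hw0
      · have hB0 : B = 0 := by rw [hB]; simp
        rw [hB0, sub_zero]
        have h1 : ‖A‖ ≤ ‖z‖ ^ p * ‖h‖ := A_norm_le hp0 z h
        have h2 : (‖z‖:ℝ) ^ p ≤ ‖z - 0‖ ^ p := by rw [sub_zero]
        nlinarith [mul_le_mul_of_nonneg_right h2 (norm_nonneg h)]
      · have hnz : (‖z‖:ℝ) ≠ 0 := norm_ne_zero_iff.2 hz
        have hnw : (‖w‖:ℝ) ≠ 0 := norm_ne_zero_iff.2 hw0
        have hzpos : (0:ℝ) < ‖z‖ := norm_pos_iff.2 hz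
        set zh : ℂ := (‖z‖⁻¹:ℝ) • z with hzh
        set wh : ℂ := (‖w‖⁻¹:ℝ) • w with hwh
        have hzh1 : ‖zh‖ = 1 := by
          rw [hzh, norm_smul, Real.norm_eq_abs, abs_of_nonneg (by positivity),
            inv_mul_cancel₀ hnz]
        have hwh1 : ‖wh‖ = 1 := by
          rw [hwh, norm_smul, Real.norm_eq_abs, abs_of_nonneg (by positivity),
            inv_mul_cancel₀ hnw]
        have hcoefz : (‖z‖:ℝ) ^ (p-2) = ‖z‖ ^ p * ‖z‖⁻¹ * ‖z‖⁻¹ := by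
          calc (‖z‖:ℝ) ^ (p-2) = ‖z‖ ^ (p-2) * (‖z‖ * ‖z‖⁻¹) * (‖z‖ * ‖z‖⁻¹) := by
                rw [mul_inv_cancel₀ hnz]; ring
            _ = (‖z‖ ^ (p-2) * (‖z‖ * ‖z‖)) * ‖z‖⁻¹ * ‖z‖⁻¹ := by ring
            _ = ‖z‖ ^ p * ‖z‖⁻¹ * ‖z‖⁻¹ := by rw [rpow_helper hz]
        have hcoefw : (‖w‖:ℝ) ^ (p-2) = ‖w‖ ^ p * ‖w‖⁻¹ * ‖w‖⁻¹ := by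
          calc (‖w‖:ℝ) ^ (p-2) = ‖w‖ ^ (p-2) * (‖w‖ * ‖w‖⁻¹) * (‖w‖ * ‖w‖⁻¹) := by
                rw [mul_inv_cancel₀ hnw]; ring
            _ = (‖w‖ ^ (p-2) * (‖w‖ * ‖w‖)) * ‖w‖⁻¹ * ‖w‖⁻¹ := by ring
            _ = ‖w‖ ^ p * ‖w‖⁻¹ * ‖w‖⁻¹ := by rw [rpow_helper hw0]
        have hAz : A = (‖z‖ ^ p : ℝ) • (((inner ℝ zh h : ℝ)) • zh) := by
          rw [hA, hzh, real_inner_smul_left, hcoefz]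
          module
        have hBw : B = (‖w‖ ^ p : ℝ) • (((inner ℝ wh h : ℝ)) • wh) := by
          rw [hB, hwh, real_inner_smul_left, hcoefw]
          module
        have expand : A - B = ((‖z‖ ^ p - ‖w‖ ^ p : ℝ)) • ((inner ℝ zh h:ℝ) • zh)
            + (‖w‖ ^ p : ℝ) • (((inner ℝ zh h:ℝ)) • zh - ((inner ℝ wh h:ℝ)) • wh) := by
          rw [hAz, hBw]; module
        have n1 : ‖((inner ℝ zh h:ℝ)) • zh‖ ≤ ‖h‖ := by
          rw [norm_smul, Real.norm_eq_abs, hzh1, mul_one]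
          calc |(inner ℝ zh h:ℝ)| ≤ ‖zh‖ * ‖h‖ := abs_real_inner_le_norm _ _
            _ = ‖h‖ := by rw [hzh1, one_mul]
        have bracket : ‖((inner ℝ zh h:ℝ)) • zh - ((inner ℝ wh h:ℝ)) • wh‖ ≤ 2 * ‖zh - wh‖ * ‖h‖ := by
          have e : ((inner ℝ zh h:ℝ)) • zh - ((inner ℝ wh h:ℝ)) • wh
              = ((inner ℝ (zh - wh) h:ℝ)) • zh + ((inner ℝ wh h:ℝ)) • (zh - wh) := by
            rw [inner_sub_left]
            push_cast
            module
          rw [e]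
          have b1 : ‖((inner ℝ (zh - wh) h:ℝ)) • zh‖ ≤ ‖zh - wh‖ * ‖h‖ := by
            rw [norm_smul, Real.norm_eq_abs, hzh1, mul_one]
            exact abs_real_inner_le_norm _ _
          have b2 : ‖((inner ℝ wh h:ℝ)) • (zh - wh)‖ ≤ ‖h‖ * ‖zh - wh‖ := by
            rw [norm_smul, Real.norm_eq_abs]
            apply mul_le_mul_of_nonneg_right _ (norm_nonneg _)
            calc |(inner ℝ wh h:ℝ)| ≤ ‖wh‖ * ‖h‖ := abs_real_inner_le_norm _ _
              _ = ‖h‖ := by rw [hwh1, one_mul]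
          calc ‖_ + _‖ ≤ ‖((inner ℝ (zh - wh) h:ℝ)) • zh‖ + ‖((inner ℝ wh h:ℝ)) • (zh - wh)‖ :=
                norm_add_le _ _
            _ ≤ 2 * ‖zh - wh‖ * ‖h‖ := by linarith
        have hunit : ‖z‖ * ‖zh - wh‖ ≤ 2 * ‖z - w‖ := unit_sub hz hw0
        have hkey : ‖z‖ ^ p * ‖z - w‖ ≤ ‖z - w‖ ^ p * ‖z‖ :=
          rpow_mul_le hp0 hp1 hzpos (norm_nonneg _) hcase
        have hq : ‖z‖ ^ p * ‖zh - wh‖ ≤ 2 * ‖z - w‖ ^ p := by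
          have step : ‖z‖ * (‖z‖ ^ p * ‖zh - wh‖) ≤ ‖z‖ * (2 * ‖z - w‖ ^ p) := by
            nlinarith [mul_le_mul_of_nonneg_left hunit (Real.rpow_nonneg (norm_nonneg z) p)]
          exact le_of_mul_le_mul_left step hzpos
        have hwz : (‖w‖:ℝ) ^ p ≤ ‖z‖ ^ p := Real.rpow_le_rpow (norm_nonneg w) hw hp0.le
        set X := ((inner ℝ zh h:ℝ)) • zh with hX1
        set Y := ((inner ℝ wh h:ℝ)) • wh with hY1
        have e2a : ‖((‖z‖ ^ p - ‖w‖ ^ p : ℝ)) • X‖ ≤ ‖z - w‖ ^ p * ‖h‖ := by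
          rw [norm_smul, Real.norm_eq_abs]
          exact mul_le_mul (norm_rpow_sub_le hp0 hp1 hw) n1 (norm_nonneg _)
            (Real.rpow_nonneg (norm_nonneg _) _)
        have e2b : ‖(‖w‖ ^ p : ℝ) • (X - Y)‖ ≤ 4 * (‖z - w‖ ^ p * ‖h‖) := by
          rw [norm_smul, Real.norm_eq_abs, abs_of_nonneg (Real.rpow_nonneg (norm_nonneg w) p)]
          have s1 : (‖w‖:ℝ) ^ p * ‖X - Y‖ ≤ ‖z‖ ^ p * (2 * ‖zh - wh‖ * ‖h‖) :=
            mul_le_mul hwz bracket (norm_nonneg _) (Real.rpow_nonneg (norm_nonneg _) _)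
          have s2 : (‖z‖ ^ p * ‖zh - wh‖) * ‖h‖ ≤ (2 * ‖z - w‖ ^ p) * ‖h‖ :=
            mul_le_mul_of_nonneg_right hq (norm_nonneg h)
          nlinarith [s1, s2]
        have final : ‖A - B‖ ≤ ‖((‖z‖ ^ p - ‖w‖ ^ p : ℝ)) • X‖ + ‖(‖w‖ ^ p : ℝ) • (X - Y)‖ := by
          rw [expand]
          exact norm_add_le _ _
        linarith [e2a, e2b, final]
  have pn : ‖p • (A - B)‖ = p * ‖A - B‖ := by
    rw [norm_smul, Real.norm_eq_abs, abs_of_nonneg hp0.le]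
  calc ‖((‖z‖ ^ p - ‖w‖ ^ p : ℝ)) • h + p • (A - B)‖
      ≤ ‖((‖z‖ ^ p - ‖w‖ ^ p : ℝ)) • h‖ + ‖p • (A - B)‖ := norm_add_le _ _
    _ ≤ ‖z - w‖ ^ p * ‖h‖ + p * (5 * (‖z - w‖ ^ p * ‖h‖)) := by
        rw [pn]
        exact add_le_add part1 (mul_le_mul_of_nonneg_left part2 hp0.le)
    _ = (1 + 5*p) * ‖z - w‖ ^ p * ‖h‖ := by ring

lemma Gd_holder {p : ℝ} (hp0 : 0 < p) (hp1 : p ≤ 1) (z w : ℂ) :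
    ‖Gd p z - Gd p w‖ ≤ (1 + 5*p) * ‖z - w‖ ^ p := by
  rcases le_total ‖w‖ ‖z‖ with h | h
  · exact Gd_holder_aux hp0 hp1 h
  · rw [norm_sub_rev, norm_sub_rev z w]
    exact Gd_holder_aux hp0 hp1 h

lemma G_sub_le {p : ℝ} (hp0 : 0 < p) (hp1 : p ≤ 1) (z w : ℂ) :
    ‖(‖z‖ ^ p : ℝ) • z - (‖w‖ ^ p : ℝ) • w‖ ≤ (1+p) * (‖z‖ ^ p + ‖w‖ ^ p) * ‖z - w‖ := by
  have hconv : Convex ℝ (segment ℝ w z) := convex_segment w z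
  have hder : ∀ ζ ∈ segment ℝ w z,
      HasFDerivWithinAt (fun y : ℂ => (‖y‖ ^ p : ℝ) • y) (Gd p ζ) (segment ℝ w z) ζ :=
    fun ζ _ => (hasFDerivAt_G hp0 ζ).hasFDerivWithinAt
  have hbound : ∀ ζ ∈ segment ℝ w z, ‖Gd p ζ‖ ≤ (1+p) * (‖z‖ ^ p + ‖w‖ ^ p) := by
    intro ζ hζ
    have hn : ‖ζ‖ ≤ max ‖w‖ ‖z‖ := by
      rcases hζ with ⟨a, c, ha, hc, hac, rfl⟩
      calc ‖a • w + c • z‖ ≤ ‖a • w‖ + ‖c • z‖ := norm_add_le _ _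
        _ = a * ‖w‖ + c * ‖z‖ := by
            rw [norm_smul, norm_smul, Real.norm_eq_abs, Real.norm_eq_abs,
              abs_of_nonneg ha, abs_of_nonneg hc]
        _ ≤ a * max ‖w‖ ‖z‖ + c * max ‖w‖ ‖z‖ :=
            add_le_add (mul_le_mul_of_nonneg_left (le_max_left _ _) ha)
              (mul_le_mul_of_nonneg_left (le_max_right _ _) hc)
        _ = max ‖w‖ ‖z‖ := by rw [← add_mul, hac, one_mul]
    have h1 : ‖Gd p ζ‖ ≤ (1+p) * ‖ζ‖ ^ p := Gd_norm_le hp0 ζ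
    have h2 : (‖ζ‖:ℝ) ^ p ≤ (max ‖w‖ ‖z‖) ^ p := Real.rpow_le_rpow (norm_nonneg ζ) hn hp0.le
    have h3 : ((max ‖w‖ ‖z‖ : ℝ)) ^ p ≤ ‖z‖ ^ p + ‖w‖ ^ p := by
      rcases max_cases ‖w‖ ‖z‖ with ⟨he, _⟩ | ⟨he, _⟩ <;> rw [he] <;>
        nlinarith [Real.rpow_nonneg (norm_nonneg z) p, Real.rpow_nonneg (norm_nonneg w) p]
    calc ‖Gd p ζ‖ ≤ (1+p) * ‖ζ‖ ^ p := h1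
      _ ≤ (1+p) * (max ‖w‖ ‖z‖) ^ p := mul_le_mul_of_nonneg_left h2 (by linarith)
      _ ≤ (1+p) * (‖z‖ ^ p + ‖w‖ ^ p) := mul_le_mul_of_nonneg_left h3 (by linarith)
  exact hconv.norm_image_sub_le_of_norm_hasFDerivWithin_le hder hbound
    (left_mem_segment ℝ w z) (right_mem_segment ℝ w z)

lemma hasFDerivAt_norm_rpow_neg {E : Type*} [NormedAddCommGroup E] [InnerProductSpace ℝ E]
    {b : ℝ} (hb : 0 < b) {x : E} (hx : x ≠ 0) :
    HasFDerivAt (fun y : E => (‖y‖ : ℝ) ^ (-b)) ((-b * ‖x‖ ^ (-b-2)) • innerSL ℝ x) x := by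
  have hxpos : (0:ℝ) < ‖x‖ := norm_pos_iff.2 hx
  have hn2 : (0:ℝ) < ‖x‖ ^ 2 := by positivity
  have hnsq : HasFDerivAt (fun y : E => (‖y‖ ^ 2 : ℝ)) (2 • innerSL ℝ x) x :=
    (hasStrictFDerivAt_norm_sq x).hasFDerivAt
  have hr : HasDerivAt (fun t : ℝ => t ^ (-b/2)) ((-b/2) * (‖x‖ ^ 2 : ℝ) ^ (-b/2 - 1)) (‖x‖ ^ 2) :=
    Real.hasDerivAt_rpow_const (Or.inl hn2.ne')
  have hc : HasFDerivAt (fun y : E => ((‖y‖ ^ 2 : ℝ)) ^ (-b/2))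
      (((-b/2) * (‖x‖ ^ 2 : ℝ) ^ (-b/2 - 1)) • (2 • innerSL ℝ x)) x := by
      have := hr.comp_hasFDerivAt x hnsq; exact this
  have key : ∀ y : E, ((‖y‖ ^ 2 : ℝ)) ^ (-b/2) = (‖y‖ : ℝ) ^ (-b) := by
    intro y
    rw [← Real.rpow_natCast ‖y‖ 2, ← Real.rpow_mul (norm_nonneg y)]
    congr 1
    ring
  have hkey2 : ((‖x‖ ^ 2 : ℝ)) ^ (-b/2 - 1) = (‖x‖ : ℝ) ^ (-b - 2) := by
    rw [← Real.rpow_natCast ‖x‖ 2, ← Real.rpow_mul (norm_nonneg x)]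
    congr 1
    ring
  simp only [key, hkey2] at hc
  convert hc using 1
  ext h
  rw [ContinuousLinearMap.smul_apply, ContinuousLinearMap.smul_apply,
    ContinuousLinearMap.smul_apply]
  simp only [smul_eq_mul]
  ring

lemma norm_phi_le {E : Type*} [NormedAddCommGroup E] [InnerProductSpace ℝ E]
    {b : ℝ} (hb : 0 < b) {x : E} (hx : x ≠ 0) :
    ‖((-b * ‖x‖ ^ (-b-2)) • innerSL ℝ x : E →L[ℝ] ℝ)‖ ≤ b * ‖x‖ ^ (-b-1) := by
  have hxpos : (0:ℝ) < ‖x‖ := norm_pos_iff.2 hx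
  have e : (‖x‖:ℝ) ^ (-b-2) * ‖x‖ = ‖x‖ ^ (-b-1) := by
    rw [show (-b-1 : ℝ) = (-b-2) + 1 by ring, Real.rpow_add hxpos, Real.rpow_one]
  calc ‖((-b * ‖x‖ ^ (-b-2)) • innerSL ℝ x : E →L[ℝ] ℝ)‖
      ≤ ‖(-b * ‖x‖ ^ (-b-2) : ℝ)‖ * ‖(innerSL ℝ x : E →L[ℝ] ℝ)‖ :=
        ContinuousLinearMap.opNorm_smul_le _ _
    _ = b * ‖x‖ ^ (-b-1) := by
        rw [innerSL_apply_norm, Real.norm_eq_abs, abs_mul, abs_neg,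
          abs_of_nonneg hb.le, abs_of_nonneg (Real.rpow_nonneg (norm_nonneg x) _),
          mul_assoc, e]

/-- Second-derivative-type estimate for the inhomogeneous nonlinearity, case `0 < p ≤ 1`:
if `u, v` are differentiable at `x ≠ 0` then `y ↦ |y|^{-b}(G(u(y)) - G(v(y)))`, with
`G(z) = |z|^p z`, is differentiable at `x`, and its gradient obeys the stated bound. -/
theorem stmt3 (N : ℕ) (hN : 1 ≤ N) (b p : ℝ) (hb : 0 < b) (hp0 : 0 < p) (hp1 : p ≤ 1) :
    ∃ C : ℝ, 0 < C ∧
      ∀ (u v : EuclideanSpace ℝ (Fin N) → ℂ) (x : EuclideanSpace ℝ (Fin N)), x ≠ 0 →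
        DifferentiableAt ℝ u x → DifferentiableAt ℝ v x →
        DifferentiableAt ℝ
            (fun y => (‖y‖ ^ (-b) : ℝ) • ((‖u y‖ ^ p : ℝ) • u y - (‖v y‖ ^ p : ℝ) • v y)) x ∧
          ‖fderiv ℝ
              (fun y => (‖y‖ ^ (-b) : ℝ) • ((‖u y‖ ^ p : ℝ) • u y - (‖v y‖ ^ p : ℝ) • v y)) x‖ ≤
            C * (‖x‖ ^ (-b - 1) * (‖u x‖ ^ p + ‖v x‖ ^ p) * ‖u x - v x‖
              + ‖x‖ ^ (-b) * ‖u x‖ ^ p * ‖fderiv ℝ (fun y => u y - v y) x‖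
              + ‖x‖ ^ (-b) * ‖fderiv ℝ v x‖ * ‖u x - v x‖ ^ p) := by
  refine ⟨6 * (1 + b), by nlinarith, ?_⟩
  intro u v x hx hu hv
  have hGu : HasFDerivAt (fun y => (‖u y‖ ^ p : ℝ) • u y)
      ((Gd p (u x)).comp (fderiv ℝ u x)) x := (hasFDerivAt_G hp0 (u x)).comp x hu.hasFDerivAt
  have hGv : HasFDerivAt (fun y => (‖v y‖ ^ p : ℝ) • v y)
      ((Gd p (v x)).comp (fderiv ℝ v x)) x := (hasFDerivAt_G hp0 (v x)).comp x hv.hasFDerivAt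
  have hψ := hGu.sub hGv
  have hφ := hasFDerivAt_norm_rpow_neg hb hx
  have hf : HasFDerivAt (fun y => (‖y‖ ^ (-b) : ℝ) • ((‖u y‖ ^ p : ℝ) • u y - (‖v y‖ ^ p : ℝ) • v y))
      ((‖x‖ ^ (-b) : ℝ) • ((Gd p (u x)).comp (fderiv ℝ u x) - (Gd p (v x)).comp (fderiv ℝ v x))
        + ((-b * ‖x‖ ^ (-b-2)) • innerSL ℝ x).smulRight
            ((‖u x‖ ^ p : ℝ) • u x - (‖v x‖ ^ p : ℝ) • v x)) x := by
    have h := hφ.smul hψ; exact h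
  refine ⟨hf.differentiableAt, ?_⟩
  rw [hf.fderiv]
  have hsub : fderiv ℝ (fun y => u y - v y) x = fderiv ℝ u x - fderiv ℝ v x :=
    (hu.hasFDerivAt.sub hv.hasFDerivAt).fderiv
  rw [hsub]
  have hD : (Gd p (u x)).comp (fderiv ℝ u x) - (Gd p (v x)).comp (fderiv ℝ v x)
      = (Gd p (u x)).comp (fderiv ℝ u x - fderiv ℝ v x)
        + ((Gd p (u x)) - (Gd p (v x))).comp (fderiv ℝ v x) := by
    rw [ContinuousLinearMap.comp_sub, ContinuousLinearMap.sub_comp]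
    abel
  have hDnorm : ‖(Gd p (u x)).comp (fderiv ℝ u x) - (Gd p (v x)).comp (fderiv ℝ v x)‖
      ≤ (1+p) * ‖u x‖ ^ p * ‖fderiv ℝ u x - fderiv ℝ v x‖
        + (1+5*p) * ‖u x - v x‖ ^ p * ‖fderiv ℝ v x‖ := by
    rw [hD]
    have d1 : ‖(Gd p (u x)).comp (fderiv ℝ u x - fderiv ℝ v x)‖
        ≤ (1+p) * ‖u x‖ ^ p * ‖fderiv ℝ u x - fderiv ℝ v x‖ := by
      calc ‖(Gd p (u x)).comp (fderiv ℝ u x - fderiv ℝ v x)‖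
          ≤ ‖Gd p (u x)‖ * ‖fderiv ℝ u x - fderiv ℝ v x‖ :=
            ContinuousLinearMap.opNorm_comp_le _ _
        _ ≤ (1+p) * ‖u x‖ ^ p * ‖fderiv ℝ u x - fderiv ℝ v x‖ :=
            mul_le_mul_of_nonneg_right (Gd_norm_le hp0 (u x)) (norm_nonneg _)
    have d2 : ‖((Gd p (u x)) - (Gd p (v x))).comp (fderiv ℝ v x)‖
        ≤ (1+5*p) * ‖u x - v x‖ ^ p * ‖fderiv ℝ v x‖ := by
      calc ‖((Gd p (u x)) - (Gd p (v x))).comp (fderiv ℝ v x)‖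
          ≤ ‖(Gd p (u x)) - (Gd p (v x))‖ * ‖fderiv ℝ v x‖ :=
            ContinuousLinearMap.opNorm_comp_le _ _
        _ ≤ ((1+5*p) * ‖u x - v x‖ ^ p) * ‖fderiv ℝ v x‖ :=
            mul_le_mul_of_nonneg_right (Gd_holder hp0 hp1 (u x) (v x)) (norm_nonneg _)
        _ = (1+5*p) * ‖u x - v x‖ ^ p * ‖fderiv ℝ v x‖ := by ring
    calc ‖_ + _‖ ≤ ‖(Gd p (u x)).comp (fderiv ℝ u x - fderiv ℝ v x)‖
        + ‖((Gd p (u x)) - (Gd p (v x))).comp (fderiv ℝ v x)‖ := norm_add_le _ _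
      _ ≤ _ := add_le_add d1 d2
  have hψnorm : ‖(‖u x‖ ^ p : ℝ) • u x - (‖v x‖ ^ p : ℝ) • v x‖
      ≤ (1+p) * (‖u x‖ ^ p + ‖v x‖ ^ p) * ‖u x - v x‖ := G_sub_le hp0 hp1 (u x) (v x)
  have hβ : (0:ℝ) ≤ ‖x‖ ^ (-b) := Real.rpow_nonneg (norm_nonneg x) _
  have hb1 : ‖(‖x‖ ^ (-b) : ℝ) • ((Gd p (u x)).comp (fderiv ℝ u x) - (Gd p (v x)).comp (fderiv ℝ v x))
        + ((-b * ‖x‖ ^ (-b-2)) • innerSL ℝ x).smulRight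
            ((‖u x‖ ^ p : ℝ) • u x - (‖v x‖ ^ p : ℝ) • v x)‖
      ≤ ‖x‖ ^ (-b) * ‖(Gd p (u x)).comp (fderiv ℝ u x) - (Gd p (v x)).comp (fderiv ℝ v x)‖
        + ‖((-b * ‖x‖ ^ (-b-2)) • innerSL ℝ x : EuclideanSpace ℝ (Fin N) →L[ℝ] ℝ)‖
          * ‖(‖u x‖ ^ p : ℝ) • u x - (‖v x‖ ^ p : ℝ) • v x‖ := by
    calc ‖_ + _‖ ≤ ‖(‖x‖ ^ (-b) : ℝ) • ((Gd p (u x)).comp (fderiv ℝ u x) - (Gd p (v x)).comp (fderiv ℝ v x))‖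
        + ‖((-b * ‖x‖ ^ (-b-2)) • innerSL ℝ x).smulRight
            ((‖u x‖ ^ p : ℝ) • u x - (‖v x‖ ^ p : ℝ) • v x)‖ := norm_add_le _ _
      _ ≤ _ := by
          apply add_le_add
          · calc ‖(‖x‖ ^ (-b) : ℝ) • ((Gd p (u x)).comp (fderiv ℝ u x) - (Gd p (v x)).comp (fderiv ℝ v x))‖
                ≤ ‖(‖x‖ ^ (-b) : ℝ)‖ * ‖(Gd p (u x)).comp (fderiv ℝ u x) - (Gd p (v x)).comp (fderiv ℝ v x)‖ :=
                  ContinuousLinearMap.opNorm_smul_le _ _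
              _ = ‖x‖ ^ (-b) * ‖(Gd p (u x)).comp (fderiv ℝ u x) - (Gd p (v x)).comp (fderiv ℝ v x)‖ := by
                  rw [Real.norm_eq_abs, abs_of_nonneg hβ]
          · rw [ContinuousLinearMap.norm_smulRight_apply]
  have hφn : ‖((-b * ‖x‖ ^ (-b-2)) • innerSL ℝ x : EuclideanSpace ℝ (Fin N) →L[ℝ] ℝ)‖
      ≤ b * ‖x‖ ^ (-b-1) := norm_phi_le hb hx
  -- numeric assembly
  have t1 : (0:ℝ) ≤ ‖x‖ ^ (-b-1) * (‖u x‖ ^ p + ‖v x‖ ^ p) * ‖u x - v x‖ := by positivity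
  have t2 : (0:ℝ) ≤ ‖x‖ ^ (-b) * ‖u x‖ ^ p * ‖fderiv ℝ u x - fderiv ℝ v x‖ := by positivity
  have t3 : (0:ℝ) ≤ ‖x‖ ^ (-b) * ‖fderiv ℝ v x‖ * ‖u x - v x‖ ^ p := by positivity
  have e1 : (1+p) ≤ 6*(1+b) := by nlinarith
  have e2 : (1+5*p) ≤ 6*(1+b) := by nlinarith
  have e3 : b*(1+p) ≤ 6*(1+b) := by nlinarith
  have f1 : (1+p) * (‖x‖ ^ (-b) * ‖u x‖ ^ p * ‖fderiv ℝ u x - fderiv ℝ v x‖)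
      ≤ (6*(1+b)) * (‖x‖ ^ (-b) * ‖u x‖ ^ p * ‖fderiv ℝ u x - fderiv ℝ v x‖) :=
    mul_le_mul_of_nonneg_right e1 t2
  have f2 : (1+5*p) * (‖x‖ ^ (-b) * ‖fderiv ℝ v x‖ * ‖u x - v x‖ ^ p)
      ≤ (6*(1+b)) * (‖x‖ ^ (-b) * ‖fderiv ℝ v x‖ * ‖u x - v x‖ ^ p) :=
    mul_le_mul_of_nonneg_right e2 t3
  have f3 : (b*(1+p)) * (‖x‖ ^ (-b-1) * (‖u x‖ ^ p + ‖v x‖ ^ p) * ‖u x - v x‖)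
      ≤ (6*(1+b)) * (‖x‖ ^ (-b-1) * (‖u x‖ ^ p + ‖v x‖ ^ p) * ‖u x - v x‖) :=
    mul_le_mul_of_nonneg_right e3 t1
  have g1 : ‖x‖ ^ (-b) * ‖(Gd p (u x)).comp (fderiv ℝ u x) - (Gd p (v x)).comp (fderiv ℝ v x)‖
      ≤ ‖x‖ ^ (-b) * ((1+p) * ‖u x‖ ^ p * ‖fderiv ℝ u x - fderiv ℝ v x‖
        + (1+5*p) * ‖u x - v x‖ ^ p * ‖fderiv ℝ v x‖) :=
    mul_le_mul_of_nonneg_left hDnorm hβ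
  have g2 : ‖((-b * ‖x‖ ^ (-b-2)) • innerSL ℝ x : EuclideanSpace ℝ (Fin N) →L[ℝ] ℝ)‖
        * ‖(‖u x‖ ^ p : ℝ) • u x - (‖v x‖ ^ p : ℝ) • v x‖
      ≤ (b * ‖x‖ ^ (-b-1)) * ((1+p) * (‖u x‖ ^ p + ‖v x‖ ^ p) * ‖u x - v x‖) :=
    mul_le_mul hφn hψnorm (norm_nonneg _) (by positivity)
  nlinarith [hb1, g1, g2, f1, f2, f3]
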